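/- For each n, let s₀ > 0 satisfy vol(D_n \ s₀B_∞ⁿ) = 1/2, where D_n is the Euclidean ball of volume 1 and B_∞ⁿ the unit cube [−1,1]ⁿ. Then s₀ ≤ 2∫_{D_n} ‖x‖_∞ dx, and hence s₀ ≤ C√(log(n+1)) for an absolute constant C. -/

import Mathlib

open MeasureTheory Metric Set
open scoped ENNReal NNReal RealInnerProductSpace

noncomputable section

abbrev E (n : ℕ) := EuclideanSpace ℝ (Fin n)

def IsConvexBody {n : ℕ} (K : Set (E n)) : Prop :=
  Convex ℝ K ∧ IsCompact K ∧ (interior K).Nonempty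

/-- Support function. -/
def suppFn {n : ℕ} (K : Set (E n)) (u : E n) : ℝ :=
  sSup ((fun y => ⟪u, y⟫) '' K)

/-- Surface area measure as a set function. -/
def surfMeas {n : ℕ} (K : Set (E n)) (Ω : Set (E n)) : ℝ≥0∞ :=
  μH[(n : ℝ) - 1] {x | x ∈ frontier K ∧ ∃ u ∈ Ω, ⟪x, u⟫ = suppFn K u}

/-- Orthogonal projection of a set onto a subspace, viewed in the ambient space. -/
def projSet {n : ℕ} (H : Submodule ℝ (E n)) (K : Set (E n)) : Set (E n) :=
  (fun x => ((H.orthogonalProjectionOnto x : H) : E n)) '' K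

/-- The Euclidean ball in ℝⁿ of volume 1. -/
def Dball (n : ℕ) : Set (E n) :=
  closedBall (0 : E n) ((volume (closedBall (0 : E n) 1)).toReal ^ (-(1 / (n : ℝ))))

/-- The cube `s·B_∞ⁿ = {x : ‖x‖_∞ ≤ s}`. -/
def supCube (n : ℕ) (s : ℝ) : Set (E n) := {x | ∀ i, |x i| ≤ s}

namespace MedianAux

lemma measurable_piBall (k : ℕ) (c : ℝ) :
    MeasurableSet {y : Fin k → ℝ | ∑ i, y i ^ 2 ≤ c} :=
  measurableSet_le (by fun_prop) measurable_const

lemma preimage_piBall (k : ℕ) {R : ℝ} (hR : 0 ≤ R) :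
    ((MeasurableEquiv.toLp 2 (Fin k → ℝ)).symm) ⁻¹' {y : Fin k → ℝ | ∑ i, y i ^ 2 ≤ R ^ 2}
      = closedBall (0 : E k) R := by
  ext x
  simp only [Set.mem_preimage, Set.mem_setOf_eq, mem_closedBall, dist_zero_right,
    EuclideanSpace.norm_eq, MeasurableEquiv.coe_toLp_symm, MeasurableEquiv.toLp_symm_apply,
    Real.norm_eq_abs, sq_abs]
  rw [show R = Real.sqrt (R ^ 2) from (Real.sqrt_sq hR).symm,
    Real.sqrt_le_sqrt_iff (by positivity), Real.sqrt_sq hR]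

lemma vol_closedBall_eq_pi (k : ℕ) {R : ℝ} (hR : 0 ≤ R) :
    volume (closedBall (0 : E k) R) = volume {y : Fin k → ℝ | ∑ i, y i ^ 2 ≤ R ^ 2} := by
  rw [← preimage_piBall k hR]
  exact (EuclideanSpace.volume_preserving_symm_measurableEquiv_toLp (Fin k)).measure_preimage
    (measurable_piBall k (R ^ 2)).nullMeasurableSet

lemma preimage_cube (k : ℕ) (a : ℝ) :
    ((MeasurableEquiv.toLp 2 (Fin k → ℝ)).symm) ⁻¹' (univ.pi fun _ : Fin k => Icc (-a) a)
      = supCube k a := by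
  ext x
  simp only [Set.mem_preimage, mem_pi, mem_univ, forall_true_left, mem_Icc, supCube,
    Set.mem_setOf_eq, abs_le, MeasurableEquiv.coe_toLp_symm, MeasurableEquiv.toLp_symm_apply]

lemma vol_supCube (k : ℕ) {a : ℝ} (ha : 0 ≤ a) :
    volume (supCube k a) = ENNReal.ofReal ((2 * a) ^ k) := by
  rw [← preimage_cube,
    (EuclideanSpace.volume_preserving_symm_measurableEquiv_toLp (Fin k)).measure_preimage
      (MeasurableSet.univ_pi fun _ => measurableSet_Icc).nullMeasurableSet,
    volume_pi_pi]
  simp only [Real.volume_Icc, show ∀ a : ℝ, a - -a = 2 * a from fun a => by ring]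
  rw [Finset.prod_const, Finset.card_univ, Fintype.card_fin,
    ENNReal.ofReal_pow (by linarith : (0 : ℝ) ≤ 2 * a)]

lemma coord_le_norm {k : ℕ} (x : E k) (i : Fin k) : |x i| ≤ ‖x‖ := by
  rw [EuclideanSpace.norm_eq, ← Real.sqrt_sq_eq_abs]
  refine Real.sqrt_le_sqrt ?_
  have h := Finset.single_le_sum (f := fun j => x j ^ 2) (fun j _ => sq_nonneg _)
    (Finset.mem_univ i)
  simpa [Real.norm_eq_abs, sq_abs] using h

lemma nontrivialE (k : ℕ) (hk : 0 < k) : Nontrivial (E k) := by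
  refine nontrivial_of_ne (EuclideanSpace.single ⟨0, hk⟩ (1 : ℝ)) 0 fun h => ?_
  have h2 := congrArg (fun v : E k => v ⟨0, hk⟩) h
  simp [EuclideanSpace.single_apply] at h2

lemma vol_closedBall_scale (k : ℕ) (hk : 0 < k) {R : ℝ} (hR : 0 ≤ R) :
    volume (closedBall (0 : E k) R)
      = ENNReal.ofReal (R ^ k) * volume (closedBall (0 : E k) 1) := by
  haveI := nontrivialE k hk
  rw [Measure.addHaar_closedBall volume 0 hR, finrank_euclideanSpace_fin,
    ← Measure.addHaar_closedBall_eq_addHaar_ball]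



lemma mp_split (k : ℕ) (i : Fin (k+1)) :
    MeasurePreserving (MeasurableEquiv.piFinSuccAbove (fun _ : Fin (k+1) => ℝ) i)
      volume ((volume : Measure ℝ).prod (volume : Measure (Fin k → ℝ))) := by
  simpa [← MeasureTheory.volume_pi] using
    measurePreserving_piFinSuccAbove (fun _ : Fin (k+1) => (volume : Measure ℝ)) i

lemma slab_bound (k : ℕ) (i : Fin (k+1)) {r s : ℝ} (hs : 0 ≤ s) (hsr : s ≤ r) :
    volume {y : Fin (k+1) → ℝ | (∑ j, y j ^ 2 ≤ r ^ 2) ∧ s < |y i|}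
      ≤ ENNReal.ofReal (2 * r) * volume {z : Fin k → ℝ | ∑ j, z j ^ 2 ≤ r ^ 2 - s ^ 2} := by
  set e := MeasurableEquiv.piFinSuccAbove (fun _ : Fin (k+1) => ℝ) i with he
  have hsub : {y : Fin (k+1) → ℝ | (∑ j, y j ^ 2 ≤ r ^ 2) ∧ s < |y i|}
      ⊆ e ⁻¹' ((Icc (-r) r) ×ˢ {z : Fin k → ℝ | ∑ j, z j ^ 2 ≤ r ^ 2 - s ^ 2}) := by
    rintro y ⟨h1, h2⟩
    have hsum : ∑ j, y j ^ 2 = y i ^ 2 + ∑ j, y (i.succAbove j) ^ 2 :=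
      Fin.sum_univ_succAbove (fun j => y j ^ 2) i
    have hyi2 : y i ^ 2 ≤ r ^ 2 := by
      have : 0 ≤ ∑ j, y (i.succAbove j) ^ 2 :=
        Finset.sum_nonneg fun j _ => sq_nonneg _
      linarith
    have habs : |y i| ≤ r := by nlinarith [abs_nonneg (y i), sq_abs (y i)]
    have hsi : s ^ 2 < y i ^ 2 := by nlinarith [sq_abs (y i)]
    refine ⟨?_, ?_⟩
    · exact abs_le.mp habs
    · show ∑ j, y (i.succAbove j) ^ 2 ≤ r ^ 2 - s ^ 2
      linarith
  calc volume {y : Fin (k+1) → ℝ | (∑ j, y j ^ 2 ≤ r ^ 2) ∧ s < |y i|}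
      ≤ volume (e ⁻¹' ((Icc (-r) r) ×ˢ {z : Fin k → ℝ | ∑ j, z j ^ 2 ≤ r ^ 2 - s ^ 2})) :=
        measure_mono hsub
    _ = ENNReal.ofReal (2 * r) * volume {z : Fin k → ℝ | ∑ j, z j ^ 2 ≤ r ^ 2 - s ^ 2} := by
        rw [(mp_split k i).measure_preimage
          ((measurableSet_Icc.prod (measurableSet_le (by fun_prop) measurable_const))).nullMeasurableSet,
          Measure.prod_prod, Real.volume_Icc,
          show r - -r = 2 * r by ring]

lemma prod_subset_ball (k : ℕ) (i : Fin (k+1)) {a ρ R : ℝ} (h : a ^ 2 + ρ ^ 2 ≤ R ^ 2) :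
    (MeasurableEquiv.piFinSuccAbove (fun _ : Fin (k+1) => ℝ) i) ⁻¹'
        ((Icc (-a) a) ×ˢ {z : Fin k → ℝ | ∑ j, z j ^ 2 ≤ ρ ^ 2})
      ⊆ {y : Fin (k+1) → ℝ | ∑ j, y j ^ 2 ≤ R ^ 2} := by
  rintro y ⟨h1, h2⟩
  have hsum : ∑ j, y j ^ 2 = y i ^ 2 + ∑ j, y (i.succAbove j) ^ 2 :=
    Fin.sum_univ_succAbove (fun j => y j ^ 2) i
  have h1' : |y i| ≤ a := abs_le.mpr h1
  have : y i ^ 2 ≤ a ^ 2 := by nlinarith [abs_nonneg (y i), sq_abs (y i)]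
  have h2' : ∑ j, y (i.succAbove j) ^ 2 ≤ ρ ^ 2 := h2
  show ∑ j, y j ^ 2 ≤ R ^ 2
  linarith


end MedianAux

namespace MedianAux
-- radius lemmas
variable {n : ℕ}

lemma omega_pos (k : ℕ) : 0 < volume (closedBall (0 : E k) 1) :=
  measure_closedBall_pos volume 0 one_pos

lemma omega_lt_top (k : ℕ) : volume (closedBall (0 : E k) 1) < ⊤ :=
  measure_closedBall_lt_top

lemma W_pos (k : ℕ) : 0 < (volume (closedBall (0 : E k) 1)).toReal :=
  ENNReal.toReal_pos (omega_pos k).ne' (omega_lt_top k).ne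

-- cube inside unit ball
lemma cube_subset_unit_ball (k : ℕ) (hk : 0 < k) :
    supCube k (1 / Real.sqrt k) ⊆ closedBall (0 : E k) 1 := by
  intro x hx
  have hk' : (0:ℝ) < Real.sqrt k := Real.sqrt_pos.mpr (by exact_mod_cast hk)
  simp only [mem_closedBall, dist_zero_right, EuclideanSpace.norm_eq, Real.norm_eq_abs, sq_abs]
  have hsum : ∑ i, x i ^ 2 ≤ ∑ _i : Fin k, (1 / Real.sqrt k) ^ 2 := by
    refine Finset.sum_le_sum fun i _ => ?_
    have := hx i
    nlinarith [abs_nonneg (x i), sq_abs (x i)]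
  have : ∑ _i : Fin k, (1 / Real.sqrt k) ^ 2 = (1:ℝ) := by
    rw [Finset.sum_const, Finset.card_univ, Fintype.card_fin, nsmul_eq_mul,
      div_pow, one_pow, Real.sq_sqrt (by positivity : (0:ℝ) ≤ (k:ℝ))]
    field_simp
  calc Real.sqrt (∑ i, x i ^ 2) ≤ Real.sqrt 1 := Real.sqrt_le_sqrt (by linarith)
    _ = 1 := Real.sqrt_one

lemma W_lower (k : ℕ) (hk : 0 < k) :
    (2 / Real.sqrt k) ^ k ≤ (volume (closedBall (0 : E k) 1)).toReal := by
  have hk' : (0:ℝ) < Real.sqrt k := Real.sqrt_pos.mpr (by exact_mod_cast hk)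
  have h1 : volume (supCube k (1 / Real.sqrt k)) ≤ volume (closedBall (0 : E k) 1) :=
    measure_mono (cube_subset_unit_ball k hk)
  rw [vol_supCube k (by positivity)] at h1
  have h2 := ENNReal.toReal_mono (omega_lt_top k).ne h1
  rw [ENNReal.toReal_ofReal (by positivity)] at h2
  calc (2 / Real.sqrt k) ^ k = (2 * (1 / Real.sqrt k)) ^ k := by ring_nf
    _ ≤ _ := h2

lemma r_le (k : ℕ) (hk : 0 < k) :
    (volume (closedBall (0 : E k) 1)).toReal ^ (-(1 / (k : ℝ))) ≤ Real.sqrt k / 2 := by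
  have hk' : (0:ℝ) < Real.sqrt k := Real.sqrt_pos.mpr (by exact_mod_cast hk)
  have hW := W_pos k
  have hb : (0:ℝ) < (2 / Real.sqrt k) ^ k := by positivity
  have h1 : (volume (closedBall (0 : E k) 1)).toReal ^ (-(1 / (k : ℝ)))
      ≤ ((2 / Real.sqrt k) ^ k : ℝ) ^ (-(1 / (k : ℝ))) :=
    Real.rpow_le_rpow_of_nonpos hb (W_lower k hk) (neg_nonpos.mpr (by positivity))
  refine h1.trans_eq ?_
  rw [← Real.rpow_natCast (2 / Real.sqrt k) k, ← Real.rpow_mul (by positivity)]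
  have hkne : (k:ℝ) ≠ 0 := by exact_mod_cast hk.ne'
  rw [show (k:ℝ) * (-(1 / (k:ℝ))) = -1 by field_simp, Real.rpow_neg_one]
  rw [inv_div]
end MedianAux

namespace MedianAux

lemma W_mul_r_pow (k : ℕ) (hk : 0 < k) :
    (volume (closedBall (0 : E k) 1)).toReal *
      ((volume (closedBall (0 : E k) 1)).toReal ^ (-(1 / (k : ℝ)))) ^ k = 1 := by
  have hW := W_pos k
  set W := (volume (closedBall (0 : E k) 1)).toReal
  have hkne : (k:ℝ) ≠ 0 := by exact_mod_cast hk.ne'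
  rw [← Real.rpow_natCast (W ^ (-(1 / (k:ℝ)))) k, ← Real.rpow_mul hW.le,
    show (-(1 / (k:ℝ))) * k = -1 by field_simp, Real.rpow_neg_one,
    mul_inv_cancel₀ hW.ne']

lemma cont_sup (m : ℕ) (hm : 0 < m) : Continuous fun x : E m => ⨆ i, |x i| := by
  haveI : Nonempty (Fin m) := ⟨⟨0, hm⟩⟩
  have key : ∀ (t : Finset (Fin m)) (ht : t.Nonempty),
      Continuous fun x : E m => t.sup' ht fun i => |x i| := by
    intro t ht
    refine Finset.Nonempty.cons_induction (motive := fun t ht =>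
      Continuous fun x : E m => t.sup' ht fun i => |x i|) ?_ ?_ ht
    · intro a
      simpa only [Finset.sup'_singleton, EuclideanSpace.proj, PiLp.proj_apply]
        using ((by fun_prop : Continuous fun x : E m => x a)).abs
    · intro a s h hs ih
      have goal := (((by fun_prop : Continuous fun x : E m => x a)).abs).max ih
      simp only [EuclideanSpace.proj, PiLp.proj_apply] at goal
      simp only [Finset.sup'_cons hs]
      exact goal
  have : (fun x : E m => ⨆ i, |x i|)
      = fun x : E m => Finset.univ.sup' Finset.univ_nonempty fun i => |x i| := by
    funext x
    exact (Finset.sup'_univ_eq_ciSup _).symm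
  rw [this]
  exact key _ _

lemma omega_ratio (k : ℕ) (hk : 1 ≤ k) :
    volume (closedBall (0 : E k) 1)
      ≤ ENNReal.ofReal ((k:ℝ) + 1) * volume (closedBall (0 : E (k+1)) 1) := by
  have hk0 : (0:ℝ) < (k:ℝ) := by exact_mod_cast hk
  set a : ℝ := 1 / ((k:ℝ) + 1) with ha
  have ha0 : 0 < a := by positivity
  have ha1 : a ≤ 1 := by rw [ha]; rw [div_le_one (by positivity)]; linarith
  set ρ : ℝ := Real.sqrt (1 - a ^ 2) with hρ
  have hρsq : ρ ^ 2 = 1 - a ^ 2 := Real.sq_sqrt (by nlinarith)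
  have hρ0 : 0 ≤ ρ := Real.sqrt_nonneg _
  have hρ1 : ρ ≤ 1 := Real.sqrt_le_one.mpr (by nlinarith)
  have hρk : 1/2 ≤ ρ ^ k := by
    have h2k : ρ ^ (2*k) ≤ ρ ^ k := pow_le_pow_of_le_one hρ0 hρ1 (by omega)
    have heq : ρ ^ (2*k) = (1 - a^2) ^ k := by rw [pow_mul, hρsq]
    have hbern : 1 + (k:ℝ) * (-(a^2)) ≤ (1 + (-(a^2))) ^ k :=
      one_add_mul_le_pow (by nlinarith) k
    have hka : (k:ℝ) * a ^ 2 ≤ 1/2 := by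
      rw [ha, div_pow, one_pow, mul_one_div, div_le_div_iff₀ (by positivity) two_pos]
      nlinarith
    have : (1 - a^2)^k = (1 + (-(a^2)))^k := by ring_nf
    linarith [heq ▸ (this ▸ hbern), h2k]
  have h1 : ENNReal.ofReal (2*a) * volume (closedBall (0 : E k) ρ)
      ≤ volume (closedBall (0 : E (k+1)) 1) := by
    rw [vol_closedBall_eq_pi (k+1) zero_le_one, vol_closedBall_eq_pi k hρ0]
    calc ENNReal.ofReal (2*a) * volume {z : Fin k → ℝ | ∑ j, z j ^ 2 ≤ ρ ^ 2}
        = volume ((MeasurableEquiv.piFinSuccAbove (fun _ : Fin (k+1) => ℝ) 0) ⁻¹'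
            ((Icc (-a) a) ×ˢ {z : Fin k → ℝ | ∑ j, z j ^ 2 ≤ ρ ^ 2})) := by
          rw [(mp_split k 0).measure_preimage
            (measurableSet_Icc.prod (measurable_piBall k (ρ^2))).nullMeasurableSet,
            Measure.prod_prod, Real.volume_Icc, show a - -a = 2*a by ring]
      _ ≤ volume {y : Fin (k+1) → ℝ | ∑ j, y j ^ 2 ≤ 1 ^ 2} :=
          measure_mono (prod_subset_ball k 0 (by nlinarith))
  rw [vol_closedBall_scale k (by omega) hρ0] at h1
  have h4 : ENNReal.ofReal a * volume (closedBall (0 : E k) 1)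
      ≤ volume (closedBall (0 : E (k+1)) 1) := by
    refine le_trans ?_ h1
    rw [← mul_assoc, ← ENNReal.ofReal_mul (by positivity)]
    exact mul_le_mul_left (ENNReal.ofReal_le_ofReal (by nlinarith)) _
  calc volume (closedBall (0 : E k) 1)
      = ENNReal.ofReal ((k:ℝ)+1) * (ENNReal.ofReal a * volume (closedBall (0 : E k) 1)) := by
        rw [← mul_assoc, ← ENNReal.ofReal_mul (by positivity),
          show ((k:ℝ)+1) * a = 1 by rw [ha]; field_simp, ENNReal.ofReal_one, one_mul]
    _ ≤ ENNReal.ofReal ((k:ℝ)+1) * volume (closedBall (0 : E (k+1)) 1) :=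
        mul_le_mul_right h4 _

lemma main_est (k : ℕ) (hk : 1 ≤ k) {s : ℝ} (hs : 0 < s)
    (hsr : s < (volume (closedBall (0 : E (k+1)) 1)).toReal ^ (-(1 / ((k+1 : ℕ) : ℝ)))) :
    volume (Dball (k+1) \ supCube (k+1) s)
      ≤ ENNReal.ofReal (2 * ((k+1 : ℕ) : ℝ)^2 * Real.exp (-s^2)) := by
  set n := k + 1 with hn
  set W := (volume (closedBall (0 : E n) 1)).toReal with hWdef
  have hW : 0 < W := W_pos n
  set r := W ^ (-(1 / ((n:ℕ) : ℝ))) with hrdef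
  have hr : 0 < r := Real.rpow_pos_of_pos hW _
  have hWr : W * r ^ n = 1 := W_mul_r_pow n (by omega)
  have hrle : r ≤ Real.sqrt n / 2 := r_le n (by omega)
  have hr2 : r ^ 2 ≤ (n:ℝ) / 4 := by
    calc r ^ 2 ≤ (Real.sqrt n / 2) ^ 2 := pow_le_pow_left₀ hr.le hrle 2
      _ = (n:ℝ)/4 := by
          rw [div_pow, Real.sq_sqrt (by positivity : (0:ℝ) ≤ (n:ℝ))]; norm_num
  have hDr : Dball n = closedBall (0 : E n) r := rfl
  set ρ := Real.sqrt (r ^ 2 - s ^ 2) with hρdef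
  have hρsq : ρ ^ 2 = r ^ 2 - s ^ 2 := Real.sq_sqrt (by nlinarith)
  have hρ0 : 0 ≤ ρ := Real.sqrt_nonneg _
  have hcubeMeas : MeasurableSet {y : Fin n → ℝ | ∀ i, |y i| ≤ s} := by
    have hset : {y : Fin n → ℝ | ∀ i, |y i| ≤ s} = ⋂ i, {y | |y i| ≤ s} := by
      ext y; simp [Set.mem_iInter]
    rw [hset]
    exact MeasurableSet.iInter fun i => measurableSet_le (by fun_prop) measurable_const
  have htrans : volume (Dball n \ supCube n s)
      = volume ({y : Fin n → ℝ | ∑ j, y j ^ 2 ≤ r ^ 2} \ {y | ∀ i, |y i| ≤ s}) := by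
    rw [hDr, ← preimage_piBall n hr.le]
    have hc : ((MeasurableEquiv.toLp 2 (Fin n → ℝ)).symm) ⁻¹' {y : Fin n → ℝ | ∀ i, |y i| ≤ s}
        = supCube n s := by
      ext x
      simp [supCube, MeasurableEquiv.coe_toLp_symm, MeasurableEquiv.toLp_symm_apply]
    rw [← hc, ← Set.preimage_diff]
    exact (EuclideanSpace.volume_preserving_symm_measurableEquiv_toLp (Fin n)).measure_preimage
      ((measurable_piBall n (r ^ 2)).diff hcubeMeas).nullMeasurableSet
  rw [htrans]
  have hunion : {y : Fin n → ℝ | ∑ j, y j ^ 2 ≤ r ^ 2} \ {y | ∀ i, |y i| ≤ s}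
      ⊆ ⋃ i : Fin n, {y : Fin n → ℝ | (∑ j, y j ^ 2 ≤ r ^ 2) ∧ s < |y i|} := by
    rintro y ⟨h1, h2⟩
    simp only [Set.mem_setOf_eq, not_forall, not_le] at h2
    obtain ⟨i, hi⟩ := h2
    exact Set.mem_iUnion.mpr ⟨i, h1, hi⟩
  have hslabvol : volume {z : Fin k → ℝ | ∑ j, z j ^ 2 ≤ r ^ 2 - s ^ 2}
      ≤ ENNReal.ofReal (ρ ^ k) *
        (ENNReal.ofReal ((k:ℝ)+1) * volume (closedBall (0 : E n) 1)) := by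
    rw [← hρsq, ← vol_closedBall_eq_pi k hρ0, vol_closedBall_scale k (by omega) hρ0]
    exact mul_le_mul_right (omega_ratio k hk) _
  have key1 : ρ ^ k ≤ r ^ k * Real.exp (-s^2) := by
    have hrr : (0:ℝ) < r ^ 2 := by positivity
    have hu : ρ ≤ r * Real.exp (-(s^2/r^2)/2) := by
      have h1 : r ^ 2 - s ^ 2 = r ^ 2 * (1 - s^2/r^2) := by field_simp
      have h2 : ρ = r * Real.sqrt (1 - s^2/r^2) := by
        rw [hρdef, h1, Real.sqrt_mul (sq_nonneg r), Real.sqrt_sq hr.le]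
      have h4 : 1 - s^2/r^2 ≤ Real.exp (-(s^2/r^2)) := by
        have := Real.add_one_le_exp (-(s^2/r^2)); linarith
      have h5 : Real.sqrt (Real.exp (-(s^2/r^2))) = Real.exp (-(s^2/r^2)/2) := by
        have hsq5 : Real.exp (-(s^2/r^2)) = (Real.exp (-(s^2/r^2)/2))^2 := by
          rw [← Real.exp_nat_mul]; congr 1; push_cast; ring
        rw [hsq5, Real.sqrt_sq (Real.exp_nonneg _)]
      have h3 : Real.sqrt (1 - s^2/r^2) ≤ Real.exp (-(s^2/r^2)/2) := by
        calc Real.sqrt (1 - s^2/r^2) ≤ Real.sqrt (Real.exp (-(s^2/r^2))) :=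
              Real.sqrt_le_sqrt h4
          _ = _ := h5
      rw [h2]
      exact mul_le_mul_of_nonneg_left h3 hr.le
    calc ρ ^ k ≤ (r * Real.exp (-(s^2/r^2)/2)) ^ k := pow_le_pow_left₀ hρ0 hu k
      _ = r ^ k * (Real.exp (-(s^2/r^2)/2)) ^ k := mul_pow _ _ _
      _ = r ^ k * Real.exp ((k:ℝ) * (-(s^2/r^2)/2)) := by rw [← Real.exp_nat_mul]
      _ ≤ r ^ k * Real.exp (-s^2) := by
          refine mul_le_mul_of_nonneg_left (Real.exp_le_exp.mpr ?_) (by positivity)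
          have hk2 : 2 * r ^ 2 ≤ (k:ℝ) := by
            have hcast : ((n:ℕ):ℝ) = (k:ℝ) + 1 := by push_cast [hn]; ring
            have hk1 : (1:ℝ) ≤ (k:ℝ) := by exact_mod_cast hk
            nlinarith [hr2, hcast ▸ hr2]
          have h6 : 2 * s^2 ≤ (k:ℝ) * (s^2/r^2) := by
            rw [mul_div_assoc', le_div_iff₀ hrr]
            nlinarith [sq_nonneg s]
          linarith
  calc volume ({y : Fin n → ℝ | ∑ j, y j ^ 2 ≤ r ^ 2} \ {y | ∀ i, |y i| ≤ s})
      ≤ ∑ i : Fin n, volume {y : Fin n → ℝ | (∑ j, y j ^ 2 ≤ r ^ 2) ∧ s < |y i|} :=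
        (measure_mono hunion).trans (measure_iUnion_fintype_le _ _)
    _ ≤ ∑ _i : Fin n, (ENNReal.ofReal (2*r) *
          volume {z : Fin k → ℝ | ∑ j, z j ^ 2 ≤ r ^ 2 - s ^ 2}) :=
        Finset.sum_le_sum fun i _ => slab_bound k i hs.le hsr.le
    _ = (n : ℝ≥0∞) * (ENNReal.ofReal (2*r) *
          volume {z : Fin k → ℝ | ∑ j, z j ^ 2 ≤ r ^ 2 - s ^ 2}) := by
        rw [Finset.sum_const, Finset.card_univ, Fintype.card_fin, nsmul_eq_mul]
    _ ≤ (n : ℝ≥0∞) * (ENNReal.ofReal (2*r) * (ENNReal.ofReal (ρ ^ k) *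
          (ENNReal.ofReal ((k:ℝ)+1) * volume (closedBall (0 : E n) 1)))) :=
        mul_le_mul_right (mul_le_mul_right hslabvol _) _
    _ = ENNReal.ofReal ((n:ℝ) * (2*r * (ρ ^ k * (((k:ℝ)+1) * W)))) := by
        rw [show volume (closedBall (0 : E n) 1) = ENNReal.ofReal W from
          (ENNReal.ofReal_toReal (omega_lt_top n).ne).symm,
          ← ENNReal.ofReal_mul (by positivity), ← ENNReal.ofReal_mul (by positivity),
          ← ENNReal.ofReal_mul (by positivity), ← ENNReal.ofReal_natCast n,
          ← ENNReal.ofReal_mul (by positivity)]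
    _ ≤ ENNReal.ofReal (2 * ((k+1 : ℕ) : ℝ)^2 * Real.exp (-s^2)) := by
        refine ENNReal.ofReal_le_ofReal ?_
        have e1 : ρ ^ k * (((k:ℝ)+1) * W) ≤ (r ^ k * Real.exp (-s^2)) * (((k:ℝ)+1) * W) :=
          mul_le_mul_of_nonneg_right key1 (by positivity)
        have hfin : (n:ℝ) * (2*r * ((r ^ k * Real.exp (-s^2)) * (((k:ℝ)+1) * W)))
            = 2 * ((k+1 : ℕ) : ℝ)^2 * Real.exp (-s^2) * (W * r ^ n) := by
          rw [hn]; push_cast; ring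
        have hpos : (0:ℝ) ≤ (n:ℝ) := by positivity
        calc (n:ℝ) * (2*r * (ρ ^ k * (((k:ℝ)+1) * W)))
            ≤ (n:ℝ) * (2*r * ((r ^ k * Real.exp (-s^2)) * (((k:ℝ)+1) * W))) := by
              refine mul_le_mul_of_nonneg_left (mul_le_mul_of_nonneg_left e1 (by positivity)) hpos
          _ = 2 * ((k+1 : ℕ) : ℝ)^2 * Real.exp (-s^2) * (W * r ^ n) := hfin
          _ = 2 * ((k+1 : ℕ) : ℝ)^2 * Real.exp (-s^2) := by rw [hWr, mul_one]

end MedianAux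


/-- if `s₀ > 0` satisfies `vol(D_n \ s₀ B_∞ⁿ) = 1/2`, then
`s₀ ≤ 2 ∫_{D_n} ‖x‖_∞ dx`, and hence `s₀ ≤ C √(log (n+1))` for an absolute constant. -/
theorem median_of_sup_norm_bound :
    ∃ C : ℝ, 0 < C ∧ ∀ (n : ℕ), 0 < n → ∀ s₀ : ℝ, 0 < s₀ →
      volume (Dball n \ supCube n s₀) = 1 / 2 →
      s₀ ≤ 2 * ∫ x in Dball n, (⨆ i, |x i|) ∧
      s₀ ≤ C * Real.sqrt (Real.log (n + 1)) := by
  refine ⟨3, by norm_num, ?_⟩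
  intro n hn s₀ hs₀ hvol
  haveI : Nonempty (Fin n) := ⟨⟨0, hn⟩⟩
  have hbdd : ∀ x : E n, BddAbove (Set.range fun i => |x i|) :=
    fun x => (Set.finite_range _).bddAbove
  constructor
  · -- s₀ ≤ 2 ∫
    have hD : IsCompact (Dball n) := isCompact_closedBall _ _
    have hcont := MedianAux.cont_sup n hn
    have hint : IntegrableOn (fun x : E n => ⨆ i, |x i|) (Dball n) volume :=
      hcont.continuousOn.integrableOn_compact hD
    have hmD : MeasurableSet (Dball n) := measurableSet_closedBall
    have hmC : MeasurableSet (supCube n s₀) := by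
      have hset : supCube n s₀ = ⋂ i, {x : E n | |x i| ≤ s₀} := by
        ext x; simp [supCube, Set.mem_iInter]
      rw [hset]
      exact MeasurableSet.iInter fun i =>
        measurableSet_le (((EuclideanSpace.proj i).continuous).abs).measurable
          measurable_const
    have hvolne : volume (Dball n \ supCube n s₀) ≠ ⊤ := by
      rw [hvol]; simp
    have hge : ∀ x ∈ Dball n \ supCube n s₀, s₀ ≤ ⨆ i, |x i| := by
      rintro x ⟨_, hxc⟩
      simp only [supCube, Set.mem_setOf_eq, not_forall, not_le] at hxc
      obtain ⟨i, hi⟩ := hxc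
      exact hi.le.trans (le_ciSup (hbdd x) i)
    have h1 := setIntegral_ge_of_const_le (hmD.diff hmC) hvolne hge
      (hint.mono_set Set.diff_subset)
    have h2 : ∫ x in Dball n \ supCube n s₀, (⨆ i, |x i|)
        ≤ ∫ x in Dball n, (⨆ i, |x i|) := by
      refine setIntegral_mono_set hint ?_ (HasSubset.Subset.eventuallyLE Set.diff_subset)
      refine Filter.Eventually.of_forall fun x => ?_
      exact le_ciSup_of_le (hbdd x) ⟨0, hn⟩ (abs_nonneg _)
    rw [measureReal_def, hvol] at h1
    have h3 : ((1/2 : ℝ≥0∞)).toReal = 1/2 := by simp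
    rw [h3, smul_eq_mul] at h1
    linarith
  · -- s₀ ≤ 3 √(log (n+1))
    have hlog : 0 < Real.log ((n:ℝ) + 1) := by
      refine Real.log_pos ?_
      have : (1:ℝ) ≤ (n:ℝ) := by exact_mod_cast hn
      linarith
    set L := Real.sqrt (Real.log ((n:ℝ) + 1)) with hLdef
    have hLpos : 0 < L := Real.sqrt_pos.mpr hlog
    by_contra hcon
    push_neg at hcon
    set W := (volume (closedBall (0 : E n) 1)).toReal with hWdef
    set r := W ^ (-(1 / (n : ℝ))) with hrdef
    have hW : 0 < W := MedianAux.W_pos n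
    have hr0 : 0 < r := Real.rpow_pos_of_pos hW _
    have hDr : Dball n = closedBall (0 : E n) r := rfl
    have hs₀r : s₀ < r := by
      by_contra hge
      push_neg at hge
      have hsub : Dball n ⊆ supCube n s₀ := by
        intro x hx i
        have h1 : ‖x‖ ≤ r := by
          rw [hDr] at hx
          simpa [mem_closedBall, dist_zero_right] using hx
        exact (MedianAux.coord_le_norm x i).trans (h1.trans hge)
      rw [Set.diff_eq_empty.mpr hsub, measure_empty] at hvol
      have hne : (1/2 : ℝ≥0∞) ≠ 0 := by
        rw [one_div]; exact ENNReal.inv_ne_zero.mpr ENNReal.ofNat_ne_top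
      exact hne hvol.symm
    have hrle : r ≤ Real.sqrt n / 2 := MedianAux.r_le n hn
    rcases Nat.lt_or_ge n 2 with h2 | h2
    · -- n = 1
      have hn1 : n = 1 := by omega
      subst hn1
      have hl2 : (0.6931471803 : ℝ) < Real.log 2 := Real.log_two_gt_d9
      have hL2 : L^2 = Real.log 2 := by
        rw [hLdef, Real.sq_sqrt hlog.le]; norm_num
      have hs1 : Real.sqrt 1 = 1 := Real.sqrt_one
      have : r ≤ 1/2 := by
        rw [show ((1:ℕ):ℝ) = 1 by norm_num, hs1] at hrle; linarith
      nlinarith [hLpos.le]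
    · obtain ⟨k, rfl⟩ : ∃ k, n = k + 1 := ⟨n - 1, by omega⟩
      have hk : 1 ≤ k := by omega
      have hmono : volume (Dball (k+1) \ supCube (k+1) s₀)
          ≤ volume (Dball (k+1) \ supCube (k+1) (3*L)) := by
        refine measure_mono (Set.diff_subset_diff_right ?_)
        intro x hx i
        exact (hx i).trans hcon.le
      have hmain := MedianAux.main_est k hk (s := 3*L) (by positivity)
        (lt_trans hcon hs₀r)
      rw [hvol] at hmono
      have h12 := le_trans hmono hmain
      have h13 : (1/2 : ℝ) ≤ 2 * ((k+1 : ℕ) : ℝ)^2 * Real.exp (-(3*L)^2) := by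
        have h := ENNReal.toReal_mono ENNReal.ofReal_ne_top h12
        rwa [ENNReal.toReal_ofReal (by positivity),
          show ((1/2 : ℝ≥0∞)).toReal = 1/2 by simp] at h
      have hx2 : (0:ℝ) < (k:ℝ) + 2 := by positivity
      have hsq : (3*L)^2 = 9 * Real.log ((k:ℝ) + 2) := by
        have hL2 : L^2 = Real.log ((k:ℝ) + 2) := by
          rw [hLdef, Real.sq_sqrt hlog.le]
          norm_num
          push_cast
          ring_nf
        rw [mul_pow, hL2]; norm_num
      have hE : Real.exp (-(3*L)^2) = (((k:ℝ)+2)^9)⁻¹ := by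
        rw [hsq, Real.exp_neg]
        congr 1
        rw [show (9:ℝ) * Real.log ((k:ℝ)+2) = Real.log (((k:ℝ)+2)^9) by
          rw [Real.log_pow]; norm_num]
        exact Real.exp_log (by positivity)
      rw [hE] at h13
      have h14 : ((k:ℝ)+2)^9 ≤ 4*((k:ℝ)+1)^2 := by
        have h9 : (0:ℝ) < ((k:ℝ)+2)^9 := by positivity
        rw [show (2 * ((k+1 : ℕ) : ℝ)^2 * (((k:ℝ)+2)^9)⁻¹)
            = 2 * ((k:ℝ)+1)^2 / ((k:ℝ)+2)^9 by push_cast; ring, le_div_iff₀ h9] at h13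
        linarith
      have hb : (3:ℝ) ≤ (k:ℝ) + 2 := by
        have : (1:ℝ) ≤ (k:ℝ) := by exact_mod_cast hk
        linarith
      have h7 : (3:ℝ)^7 ≤ ((k:ℝ)+2)^7 := pow_le_pow_left₀ (by norm_num) hb 7
      have hk0 : (0:ℝ) ≤ (k:ℝ) := Nat.cast_nonneg k
      have h9e : ((k:ℝ)+2)^9 = ((k:ℝ)+2)^7 * ((k:ℝ)+2)^2 := by ring
      have hsq2 : ((k:ℝ)+1)^2 ≤ ((k:ℝ)+2)^2 := by nlinarith
      have hone : (1:ℝ) ≤ ((k:ℝ)+1)^2 := by nlinarith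
      have c1 : (3:ℝ)^7 * ((k:ℝ)+1)^2 ≤ ((k:ℝ)+2)^7 * ((k:ℝ)+2)^2 :=
        mul_le_mul h7 hsq2 (by positivity) (by positivity)
      rw [← h9e] at c1
      norm_num at c1
      linarith [h14, c1, hone]
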